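/- For every positive integer k and every k-bounded partition λ, the k-conjugate λ^{ω_k} is again a k-bounded partition, i.e. the row lengths of the skew diagram D(λ) = λ_1 ×^{(k)} ⋯ ×^{(k)} λ_n, read from bottom to top, form a weakly decreasing sequence of positive integers each at most k. -/

import Mathlib

/-- A partition: a weakly decreasing list of positive integers
(parts listed from largest to smallest). -/
def IsPartitionList (l : List ℕ) : Prop :=
  l.Pairwise (· ≥ ·) ∧ ∀ x ∈ l, 0 < x

/-- A `k`-bounded partition: a partition all of whose parts are at most `k`. -/
def IsKBoundedPartition (k : ℕ) (l : List ℕ) : Prop :=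
  IsPartitionList l ∧ ∀ x ∈ l, x ≤ k

/-- Row `i` of a diagram whose rows (listed bottom-to-top) are encoded as
(start column, length) pairs. -/
def rowOf (D : List (ℕ × ℕ)) (i : ℕ) : ℕ × ℕ := D.getD i (0, 0)

/-- `D` encodes a skew diagram (a difference of Young diagrams, rows listed from
bottom to top): all rows are nonempty and, going up, both the left ends and the
right ends of the rows move weakly to the left. -/
def IsSkewRows (D : List (ℕ × ℕ)) : Prop :=
  (∀ r ∈ D, 0 < r.2) ∧
  D.Chain' fun r r' => r'.1 ≤ r.1 ∧ r'.1 + r'.2 ≤ r.1 + r.2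

/-- Cell in row `i` (from the bottom), column `j`, belongs to the diagram `D`. -/
def InDiag (D : List (ℕ × ℕ)) (i j : ℕ) : Prop :=
  i < D.length ∧ (rowOf D i).1 ≤ j ∧ j < (rowOf D i).1 + (rowOf D i).2

/-- The arm of a cell: the number of cells of `D` strictly to its east. -/
def armLen (D : List (ℕ × ℕ)) (i j : ℕ) : ℕ :=
  (rowOf D i).1 + (rowOf D i).2 - 1 - j

/-- The leg of a cell: the number of cells of `D` strictly to its north. -/
def legLen (D : List (ℕ × ℕ)) (i j : ℕ) : ℕ :=
  ((Finset.range D.length).filter fun i' =>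
    i < i' ∧ (rowOf D i').1 ≤ j ∧ j < (rowOf D i').1 + (rowOf D i').2).card

/-- The hook-length of a cell of `D`. -/
def hookLen (D : List (ℕ × ℕ)) (i j : ℕ) : ℕ := armLen D i j + legLen D i j + 1

/-- All hook-lengths of `D` are at most `k`. -/
def HookBounded (k : ℕ) (D : List (ℕ × ℕ)) : Prop :=
  ∀ i j, InDiag D i j → hookLen D i j ≤ k

/-- Shift `D` one column to the right and adjoin a new column of `m` cells in
column `0`, occupying the `m` consecutive rows `h, …, h + m - 1`. -/
def addCol (m h : ℕ) (D : List (ℕ × ℕ)) : List (ℕ × ℕ) :=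
  (List.range (max D.length (h + m))).map fun i =>
    if h ≤ i ∧ i < h + m then
      if i < D.length then (0, (rowOf D i).1 + (rowOf D i).2 + 1) else (0, 1)
    else ((rowOf D i).1 + 1, (rowOf D i).2)

/-- The placement of the new column at height `h` yields a genuine skew diagram
(rows stay contiguous) whose hook-lengths are bounded by `k`. -/
def ColValid (k m h : ℕ) (D : List (ℕ × ℕ)) : Prop :=
  (∀ i, h ≤ i → i < h + m → i < D.length → (rowOf D i).1 = 0) ∧
  IsSkewRows (addCol m h D) ∧ HookBounded k (addCol m h D)

/-- `k`-multiplication `m ×^{(k)} D`: adjoin a first column of length `m` to `D`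
so that the result is a skew diagram with hook-lengths bounded by `k`, having as
few rows as possible (the valid placement heights `h` all satisfy
`h + m ≥ number of rows`, so the lowest valid placement has fewest rows). -/
noncomputable def kMul (k m : ℕ) (D : List (ℕ × ℕ)) : List (ℕ × ℕ) :=
  addCol m (sInf {h | ColValid k m h D}) D

/-- `D(λ)`: the skew diagram obtained by `k`-multiplying the parts of `λ` from
right to left, the innermost part giving a single column. -/
noncomputable def kSkewDiagram (k : ℕ) : List ℕ → List (ℕ × ℕ)
  | [] => []
  | m :: rest => kMul k m (kSkewDiagram k rest)

/-- The `k`-conjugate `λ^{ω_k}`: the row lengths of `D(λ)`, read from the bottom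
row to the top row. -/
noncomputable def kConjugate (k : ℕ) (l : List ℕ) : List ℕ :=
  (kSkewDiagram k l).map Prod.snd

-- Auxiliary development

lemma rowOf_eq_getElem {D : List (ℕ×ℕ)} {i : ℕ} (h : i < D.length) : rowOf D i = D[i] :=
  List.getD_eq_getElem D (0,0) h

lemma rowOf_of_le {D : List (ℕ×ℕ)} {i : ℕ} (h : D.length ≤ i) : rowOf D i = (0,0) := by
  simp [rowOf, List.getD_eq_getElem?_getD, List.getElem?_eq_none (by simpa using h)]

lemma length_addCol (m h : ℕ) (D : List (ℕ×ℕ)) :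
    (addCol m h D).length = max D.length (h+m) := by simp [addCol]

lemma rowOf_addCol {m h : ℕ} {D : List (ℕ×ℕ)} {i : ℕ} (hi : i < max D.length (h+m)) :
    rowOf (addCol m h D) i =
      if h ≤ i ∧ i < h + m then
        if i < D.length then (0, (rowOf D i).1 + (rowOf D i).2 + 1) else (0, 1)
      else ((rowOf D i).1 + 1, (rowOf D i).2) := by
  simp [rowOf, addCol, List.getD, hi]

lemma mem_iff_rowOf {D : List (ℕ×ℕ)} {r : ℕ×ℕ} :
    r ∈ D ↔ ∃ i, ∃ _ : i < D.length, rowOf D i = r := by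
  rw [List.mem_iff_getElem]
  constructor
  · rintro ⟨i, hi, rfl⟩; exact ⟨i, hi, rowOf_eq_getElem hi⟩
  · rintro ⟨i, hi, hr⟩; exact ⟨i, hi, by rw [← rowOf_eq_getElem hi, hr]⟩

lemma isSkewRows_iff {D : List (ℕ×ℕ)} : IsSkewRows D ↔
    (∀ i, i < D.length → 0 < (rowOf D i).2) ∧
    (∀ i, i + 1 < D.length →
      (rowOf D (i+1)).1 ≤ (rowOf D i).1 ∧
      (rowOf D (i+1)).1 + (rowOf D (i+1)).2 ≤ (rowOf D i).1 + (rowOf D i).2) := by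
  unfold IsSkewRows
  unfold List.Chain'
  rw [List.isChain_iff_getElem]
  constructor
  · rintro ⟨h1, h2⟩
    refine ⟨fun i hi => by rw [rowOf_eq_getElem hi]; exact h1 _ (List.getElem_mem hi), fun i hi => ?_⟩
    have := h2 i (by omega)
    simpa [List.get_eq_getElem, rowOf_eq_getElem, hi, (by omega : i < D.length)] using this
  · rintro ⟨h1, h2⟩
    refine ⟨fun r hr => ?_, fun i hi => ?_⟩
    · obtain ⟨i, hi, rfl⟩ := mem_iff_rowOf.1 hr; exact h1 i hi
    · have hi' : i + 1 < D.length := by omega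
      simpa [List.get_eq_getElem, rowOf_eq_getElem, hi', (by omega : i < D.length)] using h2 i hi'

section Ctx
variable {k m h : ℕ} {D : List (ℕ×ℕ)}

lemma lenE (hB : D.length ≤ h + m) : (addCol m h D).length = h + m := by
  rw [length_addCol]; omega

lemma rowE_lo (hC : h ≤ D.length) {i : ℕ} (hi : i < h) :
    rowOf (addCol m h D) i = ((rowOf D i).1 + 1, (rowOf D i).2) := by
  rw [rowOf_addCol (by omega)]
  simp [show ¬(h ≤ i ∧ i < h + m) by omega]

lemma rowE_mid (hA : ∀ i, h ≤ i → i < D.length → (rowOf D i).1 = 0)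
    (hB : D.length ≤ h + m) {i : ℕ} (h1 : h ≤ i) (h2 : i < D.length) :
    rowOf (addCol m h D) i = (0, (rowOf D i).2 + 1) := by
  rw [rowOf_addCol (by omega)]
  simp [show h ≤ i ∧ i < h + m by omega, h2, hA i h1 h2]

lemma rowE_hi (hC : h ≤ D.length) {i : ℕ} (h1 : D.length ≤ i) (h2 : i < h + m) :
    rowOf (addCol m h D) i = (0, 1) := by
  rw [rowOf_addCol (by omega)]
  simp [show h ≤ i ∧ i < h + m by omega, show ¬ i < D.length by omega]

lemma legE_col0 (hA : ∀ i, h ≤ i → i < D.length → (rowOf D i).1 = 0)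
    (hB : D.length ≤ h + m) (hC : h ≤ D.length)
    (hsk : ∀ i, i < D.length → 0 < (rowOf D i).2)
    {i : ℕ} (h1 : h ≤ i) (h2 : i < h + m) :
    legLen (addCol m h D) i 0 + (i + 1) = h + m := by
  unfold legLen
  rw [lenE hB]
  have : ((Finset.range (h+m)).filter fun i' =>
      i < i' ∧ (rowOf (addCol m h D) i').1 ≤ 0 ∧
        0 < (rowOf (addCol m h D) i').1 + (rowOf (addCol m h D) i').2)
      = Finset.Ico (i+1) (h+m) := by
    ext x
    simp only [Finset.mem_filter, Finset.mem_range, Finset.mem_Ico]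
    constructor
    · rintro ⟨hx, hix, -⟩; omega
    · rintro ⟨hix, hx⟩
      refine ⟨hx, by omega, ?_⟩
      rcases lt_or_ge x D.length with hxD | hxD
      · rw [rowE_mid hA hB (by omega) hxD]; simp
      · rw [rowE_hi hC hxD hx]; simp
  rw [this, Nat.card_Ico]
  omega

lemma legE_shift (hA : ∀ i, h ≤ i → i < D.length → (rowOf D i).1 = 0)
    (hB : D.length ≤ h + m) (hC : h ≤ D.length)
    {i j : ℕ} :
    legLen (addCol m h D) i (j + 1) = legLen D i j := by
  unfold legLen
  rw [lenE hB]
  apply Finset.card_bij (fun x _ => x)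
  · intro x hx
    simp only [Finset.mem_filter, Finset.mem_range] at hx ⊢
    obtain ⟨hx1, hx2, hx3⟩ := hx
    have hxD : x < D.length := by
      by_contra hxD
      rw [rowE_hi hC (by omega) hx1] at hx3
      omega
    refine ⟨hxD, hx2, ?_⟩
    rcases lt_or_ge x h with hxh | hxh
    · rw [rowE_lo hC hxh] at hx3; simp at hx3; omega
    · rw [rowE_mid hA hB hxh hxD] at hx3
      rw [hA x hxh hxD]
      simp at hx3 ⊢
      omega
  · exact fun x _ y _ hxy => hxy
  · intro x hx
    simp only [Finset.mem_filter, Finset.mem_range] at hx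
    obtain ⟨hxD, hx2, hx3⟩ := hx
    refine ⟨x, ?_, rfl⟩
    simp only [Finset.mem_filter, Finset.mem_range]
    refine ⟨by omega, hx2, ?_⟩
    rcases lt_or_ge x h with hxh | hxh
    · rw [rowE_lo hC hxh]; simp; omega
    · rw [rowE_mid hA hB hxh hxD, hA x hxh hxD] at *
      simp at hx3 ⊢
      omega

end Ctx

section Main
variable {k m h : ℕ} {D : List (ℕ×ℕ)}

lemma skewE (hsk : IsSkewRows D)
    (hdec : ∀ i, i + 1 < D.length → (rowOf D (i+1)).2 ≤ (rowOf D i).2)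
    (hA : ∀ i, h ≤ i → i < D.length → (rowOf D i).1 = 0)
    (hB : D.length ≤ h + m) (hC : h ≤ D.length) (hm : 0 < m) :
    IsSkewRows (addCol m h D) := by
  rw [isSkewRows_iff] at hsk ⊢
  obtain ⟨hpos, hch⟩ := hsk
  rw [lenE hB]
  constructor
  · intro i hi
    rcases lt_or_ge i h with h1 | h1
    · rw [rowE_lo hC h1]; exact hpos i (by omega)
    · rcases lt_or_ge i D.length with h2 | h2
      · rw [rowE_mid hA hB h1 h2]; simp
      · rw [rowE_hi hC h2 hi]; simp
  · intro i hi
    rcases lt_or_ge (i+1) h with h1 | h1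
    · rw [rowE_lo hC h1, rowE_lo hC (by omega)]
      have := hch i (by omega)
      simp
      omega
    · rcases lt_or_ge (i+1) D.length with h2 | h2
      · -- i+1 in middle region
        rw [rowE_mid hA hB h1 h2]
        rcases lt_or_ge i h with h3 | h3
        · -- i = h - 1
          rw [rowE_lo hC h3]
          have := hdec i (by omega)
          simp
          omega
        · rw [rowE_mid hA hB h3 (by omega)]
          have := hdec i (by omega)
          simp
          omega
      · -- i+1 in top region
        rw [rowE_hi hC h2 (by omega)]
        rcases lt_or_ge i h with h3 | h3
        · rw [rowE_lo hC h3]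
          have := hpos i (by omega)
          simp
          omega
        · rcases lt_or_ge i D.length with h4 | h4
          · rw [rowE_mid hA hB h3 h4]; simp
          · rw [rowE_hi hC h4 (by omega)]; simp

lemma hookE (hsk : IsSkewRows D) (hhk : HookBounded k D)
    (hA : ∀ i, h ≤ i → i < D.length → (rowOf D i).1 = 0)
    (hB : D.length ≤ h + m) (hC : h ≤ D.length)
    (hD : ∀ i, h ≤ i → i < D.length → (rowOf D i).2 + (h + m) ≤ k + i)
    (hmk : m ≤ k) :
    HookBounded k (addCol m h D) := by
  rw [isSkewRows_iff] at hsk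
  obtain ⟨hpos, -⟩ := hsk
  intro i j hij
  obtain ⟨hi, hj1, hj2⟩ := hij
  rw [lenE hB] at hi
  unfold hookLen armLen
  rcases lt_or_ge i h with h1 | h1
  · -- low region: shifted old cell
    rw [rowE_lo hC h1] at hj1 hj2 ⊢
    simp only at hj1 hj2 ⊢
    obtain ⟨j₀, rfl⟩ : ∃ j₀, j = j₀ + 1 := ⟨j - 1, by omega⟩
    rw [legE_shift hA hB hC]
    have hd : i < D.length := by omega
    have := hhk i j₀ ⟨hd, by omega, by omega⟩
    unfold hookLen armLen at this
    omega
  · rcases lt_or_ge i D.length with h2 | h2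
    · -- middle region
      rw [rowE_mid hA hB h1 h2] at hj1 hj2 ⊢
      simp only at hj1 hj2 ⊢
      rcases Nat.eq_zero_or_pos j with rfl | hjpos
      · have := legE_col0 hA hB hC hpos h1 (by omega)
        have hD' := hD i h1 h2
        omega
      · obtain ⟨j₀, rfl⟩ : ∃ j₀, j = j₀ + 1 := ⟨j - 1, by omega⟩
        rw [legE_shift hA hB hC]
        have h0 := hA i h1 h2
        have := hhk i j₀ ⟨h2, by omega, by omega⟩
        unfold hookLen armLen at this
        omega
    · -- top region
      rw [rowE_hi hC h2 hi] at hj1 hj2 ⊢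
      simp only at hj1 hj2 ⊢
      have hj : j = 0 := by omega
      subst hj
      have := legE_col0 hA hB hC hpos h1 hi
      omega

lemma colValid_of (hsk : IsSkewRows D) (hhk : HookBounded k D)
    (hdec : ∀ i, i + 1 < D.length → (rowOf D (i+1)).2 ≤ (rowOf D i).2)
    (hA : ∀ i, h ≤ i → i < D.length → (rowOf D i).1 = 0)
    (hB : D.length ≤ h + m) (hC : h ≤ D.length) (hm : 0 < m)
    (hD : ∀ i, h ≤ i → i < D.length → (rowOf D i).2 + (h + m) ≤ k + i)
    (hmk : m ≤ k) :
    ColValid k m h D :=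
  ⟨fun i hi _ hiD => hA i hi hiD, skewE hsk hdec hA hB hC hm,
    hookE hsk hhk hA hB hC hD hmk⟩

end Main

section Nec
variable {k m h : ℕ} {D : List (ℕ×ℕ)}

lemma le_len_of_colValid (hm : 0 < m) (hv : ColValid k m h D) : h ≤ D.length := by
  by_contra hc
  push_neg at hc
  -- row D.length of addCol has second component 0
  have hlen : D.length < (addCol m h D).length := by rw [length_addCol]; omega
  have hrow : rowOf (addCol m h D) D.length = ((rowOf D D.length).1 + 1, (rowOf D D.length).2) := by
    rw [rowOf_addCol (by rw [← length_addCol]; exact hlen)]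
    simp [show ¬(h ≤ D.length ∧ D.length < h + m) by omega]
  have h0 : (rowOf D D.length).2 = 0 := by rw [rowOf_of_le le_rfl]
  have := (isSkewRows_iff.1 hv.2.1).1 D.length hlen
  rw [hrow] at this
  simp [h0] at this

lemma len_le_of_colValid (hm : 0 < m) (hv : ColValid k m h D) : D.length ≤ h + m := by
  by_contra hc
  push_neg at hc
  have hlen : (addCol m h D).length = D.length := by rw [length_addCol]; omega
  have hch := (isSkewRows_iff.1 hv.2.1).2 (h+m-1) (by omega)
  have hr1 : (rowOf (addCol m h D) (h+m-1)).1 = 0 := by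
    rw [rowOf_addCol (by omega)]
    simp [show h ≤ h+m-1 ∧ h+m-1 < h + m by omega, show h+m-1 < D.length by omega]
  have hr2 : rowOf (addCol m h D) (h+m-1+1) =
      ((rowOf D (h+m-1+1)).1 + 1, (rowOf D (h+m-1+1)).2) := by
    rw [rowOf_addCol (by omega)]
    simp [show ¬(h ≤ h+m-1+1 ∧ h+m-1+1 < h + m) by omega]
  rw [hr2] at hch
  simp only at hch
  omega

lemma hook_col0_of_colValid (hm : 0 < m) (hv : ColValid k m h D)
    (hsk : IsSkewRows D) :
    ∀ i, h ≤ i → i < D.length → (rowOf D i).2 + (h + m) ≤ k + i := by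
  have hC := le_len_of_colValid hm hv
  have hB := len_le_of_colValid hm hv
  have hA : ∀ i, h ≤ i → i < D.length → (rowOf D i).1 = 0 :=
    fun i hi hiD => hv.1 i hi (by omega) hiD
  intro i h1 h2
  have hrow := rowE_mid (m := m) hA hB h1 h2
  have hid : InDiag (addCol m h D) i 0 := by
    refine ⟨by rw [lenE hB]; omega, ?_⟩
    rw [hrow]
    simp
  have hhk := hv.2.2 i 0 hid
  unfold hookLen armLen at hhk
  rw [hrow] at hhk
  simp only at hhk
  have hleg := legE_col0 hA hB hC (isSkewRows_iff.1 hsk).1 h1 (by omega)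
  omega

end Nec

/-- The inductive invariant: `D` is a skew diagram with hooks bounded by `k`,
row lengths weakly decreasing bottom-to-top, all rows of start `0` among the
top `c` rows, the "critical hook" invariant, and the top row starts at `0`. -/
def GoodDiag (k c : ℕ) (D : List (ℕ×ℕ)) : Prop :=
  IsSkewRows D ∧ HookBounded k D ∧
  (∀ i, i + 1 < D.length → (rowOf D (i+1)).2 ≤ (rowOf D i).2) ∧
  (∀ i, i < D.length → (rowOf D i).1 = 0 → D.length ≤ i + c) ∧
  (∀ i, i + 1 < D.length → 1 ≤ (rowOf D i).1 → (rowOf D (i+1)).1 = 0 →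
    k + (i + 1) < (rowOf D i).2 + D.length) ∧
  (D.length = 0 ∨ (rowOf D (D.length - 1)).1 = 0)

lemma goodDiag_nil (k c : ℕ) : GoodDiag k c [] := by
  refine ⟨⟨by simp, List.isChain_nil⟩, fun i j hij => absurd hij.1 (by simp), ?_, ?_, ?_, Or.inl rfl⟩ <;>
    intro i hi <;> simp at hi

lemma goodDiag_step {k c m : ℕ} {D : List (ℕ×ℕ)} (hG : GoodDiag k c D)
    (hcm : c ≤ m) (hm : 0 < m) (hmk : m ≤ k) :
    GoodDiag k m (kMul k m D) := by
  obtain ⟨hsk, hhk, hdec, htz, hinv7, htop⟩ := hG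
  have hpos := (isSkewRows_iff.1 hsk).1
  -- the set of valid heights is nonempty: D.length works
  have hne : ColValid k m D.length D :=
    colValid_of hsk hhk hdec (fun i h1 h2 => by omega) (by omega) le_rfl hm
      (fun i h1 h2 => by omega) hmk
  set h := sInf {h | ColValid k m h D} with hh
  have hvh : ColValid k m h D := Nat.sInf_mem (s := {h | ColValid k m h D}) ⟨D.length, hne⟩
  have hC : h ≤ D.length := le_len_of_colValid hm hvh
  have hB : D.length ≤ h + m := len_le_of_colValid hm hvh
  have hA : ∀ i, h ≤ i → i < D.length → (rowOf D i).1 = 0 :=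
    fun i hi hiD => hvh.1 i hi (by omega) hiD
  have hHook := hook_col0_of_colValid hm hvh hsk
  have hkMul : kMul k m D = addCol m h D := rfl
  -- the key claim (invariant I6 for the new diagram)
  have CLM : ∀ g, h = g + 1 → k < (rowOf D g).2 + m := by
    intro g hg
    by_contra hle
    push_neg at hle
    have hgD : g < D.length := by omega
    rcases Nat.eq_zero_or_pos (rowOf D g).1 with hs0 | hs1
    · -- start of row g is 0 : then g is also a valid height, contradiction
      have hvg : ColValid k m g D := by
        refine colValid_of hsk hhk hdec ?_ ?_ (by omega) hm ?_ hmk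
        · intro i h1 h2
          rcases Nat.eq_or_lt_of_le h1 with rfl | h1'
          · exact hs0
          · exact hA i (by omega) h2
        · have := htz g hgD hs0
          omega
        · intro i h1 h2
          rcases Nat.eq_or_lt_of_le h1 with rfl | h1'
          · omega
          · have := hHook i (by omega) h2
            omega
      have := Nat.sInf_le (show g ∈ {h | ColValid k m h D} from hvg)
      omega
    · -- start of row g is ≥ 1
      rcases Nat.eq_or_lt_of_le hC with hEq | hlt
      · -- h = D.length : contradicts top-row-start-0 invariant
        rcases htop with h0 | h0
        · omega
        · rw [show D.length - 1 = g by omega] at h0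
          omega
      · -- h < D.length : use the critical hook invariant of D
        have := hinv7 g (by omega) hs1 (by rw [show g+1 = h by omega]; exact hA h le_rfl hlt)
        omega
  rw [hkMul]
  have hlenE := lenE (m := m) (h := h) (D := D) hB
  refine ⟨hvh.2.1, hvh.2.2, ?_, ?_, ?_, ?_⟩
  · -- row lengths weakly decreasing
    intro i hi
    rw [hlenE] at hi
    rcases lt_or_ge (i+1) h with h1 | h1
    · rw [rowE_lo hC h1, rowE_lo hC (by omega)]
      exact hdec i (by omega)
    · rcases lt_or_ge (i+1) D.length with h2 | h2
      · rw [rowE_mid hA hB h1 h2]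
        rcases lt_or_ge i h with h3 | h3
        · -- the crucial strict decrease at the boundary
          rw [rowE_lo hC h3]
          have hih : i + 1 = h := by omega
          have hclm := CLM i hih.symm
          have := hHook (i+1) h1 h2
          simp only
          omega
        · rw [rowE_mid hA hB h3 (by omega)]
          exact Nat.succ_le_succ (hdec i (by omega))
      · rw [rowE_hi hC h2 (by omega)]
        rcases lt_or_ge i h with h3 | h3
        · rw [rowE_lo hC h3]
          exact hpos i (by omega)
        · rcases lt_or_ge i D.length with h4 | h4
          · rw [rowE_mid hA hB h3 h4]; simp
          · rw [rowE_hi hC h4 (by omega)]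
  · -- top-zeros with bound m
    intro i hi h0
    rw [hlenE] at hi ⊢
    rcases lt_or_ge i h with h1 | h1
    · rw [rowE_lo hC h1] at h0
      simp at h0
    · omega
  · -- critical hook invariant
    intro i hi hs1 hs0
    rw [hlenE] at hi ⊢
    have hih : i + 1 = h := by
      rcases lt_or_ge (i+1) h with h1 | h1
      · rw [rowE_lo hC h1] at hs0; simp at hs0
      · rcases lt_or_ge i h with h2 | h2
        · omega
        · exfalso
          rcases lt_or_ge i D.length with h3 | h3
          · rw [rowE_mid hA hB h2 h3] at hs1; simp at hs1
          · rw [rowE_hi hC h3 (by omega)] at hs1; simp at hs1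
    have hclm := CLM i hih.symm
    rw [rowE_lo hC (by omega)]
    simp only
    omega
  · -- top row has start 0
    right
    rw [hlenE]
    rcases lt_or_ge (h + m - 1) D.length with h1 | h1
    · rw [rowE_mid hA hB (by omega) h1]
    · rw [rowE_hi hC h1 (by omega)]

lemma goodDiag_kSkew (k : ℕ) :
    ∀ l : List ℕ, l.Pairwise (· ≥ ·) → (∀ x ∈ l, 0 < x) → (∀ x ∈ l, x ≤ k) →
    GoodDiag k (l.headD 0) (kSkewDiagram k l) := by
  intro l
  induction l with
  | nil => intro _ _ _; exact goodDiag_nil k 0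
  | cons m rest ih =>
    intro hsort hpos hbd
    have hsort' := (List.pairwise_cons.1 hsort).2
    have hrec := ih hsort' (fun x hx => hpos x (List.mem_cons_of_mem m hx))
      (fun x hx => hbd x (List.mem_cons_of_mem m hx))
    have hcm : rest.headD 0 ≤ m := by
      cases rest with
      | nil => simp
      | cons y t => exact (List.pairwise_cons.1 hsort).1 y (by simp)
    have := goodDiag_step hrec hcm (hpos m (by simp)) (hbd m (by simp))
    simpa [kSkewDiagram] using this

lemma rowLen_le_of_good {k : ℕ} {D : List (ℕ×ℕ)} (hsk : IsSkewRows D)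
    (hhk : HookBounded k D) {i : ℕ} (hi : i < D.length) : (rowOf D i).2 ≤ k := by
  have hpos := (isSkewRows_iff.1 hsk).1 i hi
  have := hhk i (rowOf D i).1 ⟨hi, le_rfl, by omega⟩
  unfold hookLen armLen at this
  omega


/-- For every positive integer `k` and every `k`-bounded partition
`λ`, the `k`-conjugate `λ^{ω_k}` (the row lengths of `D(λ)`, read bottom to top)
is again a `k`-bounded partition: a weakly decreasing sequence of positive
integers, each at most `k`. -/
theorem kConjugate_isKBoundedPartition (k : ℕ) (hk : 0 < k) (l : List ℕ)
    (hl : IsKBoundedPartition k l) :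
    IsKBoundedPartition k (kConjugate k l) := by
  obtain ⟨⟨hsort, hpos⟩, hbd⟩ := hl
  obtain ⟨hsk, hhk, hdec, -, -, -⟩ := goodDiag_kSkew k l hsort hpos hbd
  set D := kSkewDiagram k l with hD
  have hmem : ∀ x ∈ kConjugate k l, ∃ i, ∃ _ : i < D.length, (rowOf D i).2 = x := by
    intro x hx
    rw [kConjugate, List.mem_map] at hx
    obtain ⟨r, hr, rfl⟩ := hx
    obtain ⟨i, hi, hri⟩ := mem_iff_rowOf.1 hr
    exact ⟨i, hi, by rw [hri]⟩
  refine ⟨⟨?_, ?_⟩, ?_⟩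
  · -- sorted
    have htrans : IsTrans ℕ (· ≥ ·) := ⟨fun a b c h1 h2 => le_trans h2 h1⟩
    rw [← List.isChain_iff_pairwise, List.isChain_iff_getElem]
    intro i hi
    have hlen : (kConjugate k l).length = D.length := by
      rw [kConjugate, List.length_map, hD]
    rw [hlen] at hi
    have h1 : i < D.length := by omega
    have h2 : i + 1 < D.length := by omega
    simp only [List.get_eq_getElem, kConjugate, List.getElem_map]
    show D[i+1].2 ≤ D[i].2
    rw [← rowOf_eq_getElem h1, ← rowOf_eq_getElem h2]
    exact hdec i h2
  · -- positive
    intro x hx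
    obtain ⟨i, hi, rfl⟩ := hmem x hx
    exact (isSkewRows_iff.1 hsk).1 i hi
  · -- bounded by k
    intro x hx
    obtain ⟨i, hi, rfl⟩ := hmem x hx
    exact rowLen_le_of_good hsk hhk hi
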